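/- Let N ∈ ℕ, N ≥ 1, and λ ≥ 1. Then there exists a constant C = C(λ,N) > 0 such that the following holds: for every open set A ⊆ B_1(0) ⊂ ℝ^N with A ≠ B_1(0) there exists a finite family of open balls B_{r_1}(y_1), …, B_{r_M}(y_M) in ℝ^N such that (i) B_{r_k}(y_k) ⊆ A for every k; (ii) for every k the set (∂B_{r_k}(y_k) ∩ ∂A) \ ∂B_1(0) is nonempty; (iii) the enlarged balls B_{λ r_1}(y_1), …, B_{λ r_M}(y_M) are pairwise disjoint; and (iv) L^N(A) ≤ C · Σ_{k=1}^M r_k^N, where L^N is Lebesgue measure on ℝ^N. Moreover one may take C(λ,N) = 2 ω_N (3λ)^N, where ω_N is the Lebesgue measure of the unit ball of ℝ^N. -/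

import Mathlib

open MeasureTheory Metric Set
open scoped ENNReal NNReal

section aux

variable {E : Type*} [NormedAddCommGroup E] [NormedSpace ℝ E]

lemma mem_frontier_aux {A : Set E} (hA : IsOpen A) {y w : E} {r : ℝ} (hr : 0 < r)
    (hb : ball y r ⊆ A) (hw : w ∉ A) (hd : dist w y = r) : w ∈ frontier A := by
  rw [hA.frontier_eq]
  refine ⟨?_, hw⟩
  have h1 : w ∈ closedBall y r := mem_closedBall.mpr hd.le
  rw [← closure_ball y hr.ne'] at h1
  exact closure_mono hb h1

lemma ball_infDist_subset {A : Set E} {x : E} (hac : Aᶜ.Nonempty) :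
    ball x (Metric.infDist x Aᶜ) ⊆ A := by
  intro z hz
  by_contra hzA
  have h1 : Metric.infDist x Aᶜ ≤ dist x z := Metric.infDist_le_dist_of_mem hzA
  rw [mem_ball] at hz
  rw [dist_comm] at h1
  linarith

lemma le_infDist_aux {s : Set E} {x : E} {b : ℝ} (hs : s.Nonempty)
    (h : ∀ y ∈ s, b ≤ dist x y) : b ≤ Metric.infDist x s := by
  by_contra hlt
  push_neg at hlt
  obtain ⟨y, hy, hyd⟩ := (Metric.infDist_lt_iff hs).mp hlt
  exact absurd (h y hy) (by linarith)

end aux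

lemma key_ball {E : Type*} [NormedAddCommGroup E] [InnerProductSpace ℝ E] [ProperSpace E]
    (A : Set E) (hA : IsOpen A)
    (hsub : A ⊆ ball 0 1) (hne : A ≠ ball 0 1) {x : E} (hx : x ∈ A) :
    ∃ y r, 0 < r ∧ r ≤ 2 ∧ x ∈ ball y r ∧ ball y r ⊆ A ∧
      ∃ w, dist w y = r ∧ w ∈ frontier A ∧ ‖w‖ < 1 := by
  obtain ⟨p₀, hp₀A⟩ : ∃ p, p ∈ ball (0:E) 1 ∧ p ∉ A := by
    by_contra h
    push_neg at h
    exact hne (hsub.antisymm h)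
  have hAc : Aᶜ.Nonempty := ⟨p₀, hp₀A.2⟩
  have hAcc : IsClosed Aᶜ := hA.isClosed_compl
  set ρ := Metric.infDist x Aᶜ with hρdef
  have hball : ball x ρ ⊆ A := ball_infDist_subset hAc
  have hρpos : 0 < ρ := by
    obtain ⟨ε, hε, hεball⟩ := Metric.isOpen_iff.mp hA x hx
    refine lt_of_lt_of_le hε (le_infDist_aux hAc fun z hz => ?_)
    by_contra hlt
    push_neg at hlt
    exact hz (hεball (mem_ball.mpr (by rw [dist_comm]; exact hlt)))
  have hxlt : ‖x‖ < 1 := mem_ball_zero_iff.mp (hsub hx)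
  have hρ2 : ρ ≤ 2 := by
    have h1 : ρ ≤ dist x p₀ := Metric.infDist_le_dist_of_mem hp₀A.2
    have h2 : dist x p₀ ≤ ‖x‖ + ‖p₀‖ := by
      rw [dist_eq_norm]
      exact norm_sub_le _ _
    have h3 : ‖p₀‖ < 1 := mem_ball_zero_iff.mp hp₀A.1
    linarith
  by_cases hgood : ∃ w ∈ Aᶜ, dist x w = ρ ∧ ‖w‖ < 1
  · obtain ⟨w, hwc, hwd, hwn⟩ := hgood
    exact ⟨x, ρ, hρpos, hρ2, mem_ball_self hρpos, hball,
      w, by rw [dist_comm]; exact hwd,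
      mem_frontier_aux hA hρpos hball hwc (by rw [dist_comm]; exact hwd), hwn⟩
  push_neg at hgood
  obtain ⟨w₀, hw₀c, hw₀d⟩ := hAcc.exists_infDist_eq_dist hAc x
  have h1η : 1 ≤ ‖w₀‖ := hgood w₀ hw₀c hw₀d.symm
  have hρge : 1 - ‖x‖ ≤ ρ := by
    have : ‖w₀‖ ≤ ‖x‖ + dist x w₀ := by
      rw [dist_eq_norm]
      calc ‖w₀‖ = ‖x - (x - w₀)‖ := by rw [sub_sub_cancel]
        _ ≤ ‖x‖ + ‖x - w₀‖ := norm_sub_le _ _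
    rw [← hw₀d] at this
    linarith
  have hxne : x ≠ 0 := by
    rintro rfl
    simp only [norm_zero, sub_zero] at hρge
    have : ball (0:E) 1 ⊆ A := fun z hz => hball (by
      rw [mem_ball] at hz ⊢; linarith)
    exact hne (hsub.antisymm this)
  have hxnorm : 0 < ‖x‖ := norm_pos_iff.mpr hxne
  set z := ‖x‖⁻¹ • x with hzdef
  have hz1 : ‖z‖ = 1 := by
    rw [hzdef, norm_smul, norm_inv, norm_norm, inv_mul_cancel₀ hxnorm.ne']
  have hzc : z ∈ Aᶜ := by
    intro hzA
    have := mem_ball_zero_iff.mp (hsub hzA)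
    rw [hz1] at this
    exact lt_irrefl _ this
  have hxz : x = ‖x‖ • z := by
    rw [hzdef, smul_smul, mul_inv_cancel₀ hxnorm.ne', one_smul]
  have hρle : ρ ≤ 1 - ‖x‖ := by
    have hd : dist x z = 1 - ‖x‖ := by
      rw [dist_eq_norm]
      nth_rewrite 1 [hxz]
      nth_rewrite 2 [← one_smul ℝ z]
      rw [← sub_smul, norm_smul, hz1, mul_one, Real.norm_eq_abs, abs_of_nonpos (by linarith),
        neg_sub]
    rw [← hd]
    exact Metric.infDist_le_dist_of_mem hzc
  have hρeq : ρ = 1 - ‖x‖ := le_antisymm hρle hρge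
  set c : ℝ → E := fun t => (1 - t) • z with hcdef
  have hcd : ∀ s t : ℝ, dist (c s) (c t) = |s - t| := by
    intro s t
    rw [hcdef, dist_eq_norm]
    simp only
    rw [← sub_smul, norm_smul, hz1, mul_one, Real.norm_eq_abs]
    rw [show (1:ℝ) - s - (1 - t) = -(s - t) by ring, abs_neg]
  have hcx : c ρ = x := by
    rw [hcdef, hρeq]
    simp only [sub_sub_cancel]
    exact hxz.symm
  have hcn : ∀ t : ℝ, ‖c t‖ = |1 - t| := by
    intro t
    rw [hcdef]
    simp only [norm_smul, hz1, mul_one, Real.norm_eq_abs]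
  set S := {t : ℝ | ρ ≤ t ∧ t < 1 ∧ ball (c t) t ⊆ A} with hSdef
  have hρS : ρ ∈ S := ⟨le_rfl, by rw [hρeq]; linarith, by rw [hcx]; exact hball⟩
  have hSne : S.Nonempty := ⟨ρ, hρS⟩
  have hSbdd : BddAbove S := ⟨1, fun t ht => ht.2.1.le⟩
  set t₀ := sSup S with ht₀def
  have ht₀ge : ρ ≤ t₀ := le_csSup hSbdd hρS
  have ht₀le : t₀ ≤ 1 := csSup_le hSne fun t ht => ht.2.1.le
  have ht₀pos : 0 < t₀ := lt_of_lt_of_le hρpos ht₀ge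
  have hmem : ∀ t, ρ ≤ t → t < t₀ → ball (c t) t ⊆ A := by
    intro t htρ htt
    obtain ⟨s, hsS, hts⟩ := exists_lt_of_lt_csSup hSne htt
    refine subset_trans (ball_subset_ball' ?_) hsS.2.2
    rw [hcd]
    rw [abs_of_nonpos (by linarith)]
    linarith
  have hlt1 : t₀ < 1 := by
    rcases lt_or_eq_of_le ht₀le with h | h
    · exact h
    exfalso
    have hcov : ball (0:E) 1 ⊆ A := by
      intro w hw
      have hw1 : ‖w‖ < 1 := mem_ball_zero_iff.mp hw
      set t := max ρ ((‖w‖ + 3) / 4) with htdef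
      have htlt : t < 1 := by
        apply max_lt
        · rw [hρeq]; linarith
        · linarith
      refine hmem t (le_max_left _ _) (by rw [h]; exact htlt) ?_
      rw [mem_ball]
      have h4 : (‖w‖ + 3) / 4 ≤ t := le_max_right _ _
      calc dist w (c t) ≤ dist w 0 + dist 0 (c t) := dist_triangle _ _ _
        _ = ‖w‖ + ‖c t‖ := by rw [dist_zero_right, dist_comm, dist_zero_right]
        _ = ‖w‖ + (1 - t) := by rw [hcn, abs_of_nonneg (by linarith)]
        _ < t := by linarith
    exact hne (hsub.antisymm hcov)
  have hball₀ : ball (c t₀) t₀ ⊆ A := by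
    intro w hw
    have hd : dist w (c t₀) < t₀ := mem_ball.mp hw
    rcases eq_or_lt_of_le ht₀ge with h | h
    · refine hball (mem_ball.mpr ?_)
      rw [← hcx, h]
      exact hd
    · set s := max ρ ((dist w (c t₀) + 3 * t₀) / 4) with hsdef
      have hs1 : s < t₀ := max_lt h (by linarith)
      have hs4 : (dist w (c t₀) + 3 * t₀) / 4 ≤ s := le_max_right _ _
      refine hmem s (le_max_left _ _) hs1 ?_
      rw [mem_ball]
      have hdn : 0 ≤ dist w (c t₀) := dist_nonneg
      calc dist w (c s) ≤ dist w (c t₀) + dist (c t₀) (c s) := dist_triangle _ _ _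
        _ = dist w (c t₀) + (t₀ - s) := by
            rw [hcd, abs_of_nonneg (by linarith)]
        _ < s := by linarith
  have hxball₀ : x ∈ ball (c t₀) t₀ := by
    rw [mem_ball, ← hcx, hcd, abs_of_nonpos (by linarith)]
    linarith
  have hfar : ∀ w ∈ Aᶜ, t₀ ≤ dist (c t₀) w := by
    intro w hw
    by_contra hlt
    push_neg at hlt
    exact hw (hball₀ (mem_ball.mpr (by rw [dist_comm]; exact hlt)))
  obtain ⟨t, ht1, ht2, ht3, ht4⟩ :
      ∃ t, t₀ < t ∧ t < 1 ∧ t < 2 * t₀ ∧ t < t₀ + (1 - ‖x‖) / 2 := by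
    have h1 : 0 < min (1 - ‖x‖) (min t₀ (1 - t₀)) :=
      lt_min (by linarith) (lt_min ht₀pos (by linarith))
    have h2 : min (1 - ‖x‖) (min t₀ (1 - t₀)) ≤ 1 - ‖x‖ := min_le_left _ _
    have h3 : min (1 - ‖x‖) (min t₀ (1 - t₀)) ≤ t₀ :=
      le_trans (min_le_right _ _) (min_le_left _ _)
    have h4 : min (1 - ‖x‖) (min t₀ (1 - t₀)) ≤ 1 - t₀ :=
      le_trans (min_le_right _ _) (min_le_right _ _)
    exact ⟨t₀ + min (1 - ‖x‖) (min t₀ (1 - t₀)) / 4, by linarith, by linarith, by linarith,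
      by linarith⟩
  have htρ : ρ ≤ t := by linarith
  have hnb : ¬ ball (c t) t ⊆ A := by
    intro h
    have : t ≤ t₀ := le_csSup hSbdd ⟨htρ, ht2, h⟩
    linarith
  obtain ⟨w₂, hw₂b, hw₂A⟩ := not_subset.mp hnb
  set ρ' := Metric.infDist (c t) Aᶜ with hρ'def
  have hρ'lt : ρ' < t := by
    have h1 : ρ' ≤ dist (c t) w₂ := Metric.infDist_le_dist_of_mem hw₂A
    have h2 : dist w₂ (c t) < t := mem_ball.mp hw₂b
    rw [dist_comm] at h2
    linarith
  have hρ'ge : 2 * t₀ - t ≤ ρ' := by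
    refine le_infDist_aux hAc fun w hw => ?_
    have h1 := hfar w hw
    have h2 : dist (c t₀) w ≤ dist (c t₀) (c t) + dist (c t) w := dist_triangle _ _ _
    rw [hcd, abs_of_nonpos (by linarith)] at h2
    linarith
  have hρ'pos : 0 < ρ' := by linarith
  have hb' : ball (c t) ρ' ⊆ A := ball_infDist_subset hAc
  have hxb' : x ∈ ball (c t) ρ' := by
    have key2 : 2 * t < 2 * t₀ + ρ := by rw [hρeq]; linarith
    rw [mem_ball, ← hcx, hcd, abs_of_nonpos (by linarith)]
    linarith
  obtain ⟨w₁, hw₁c, hw₁d⟩ := hAcc.exists_infDist_eq_dist hAc (c t)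
  have hw₁dist : dist w₁ (c t) = ρ' := by rw [dist_comm]; exact hw₁d.symm
  have hw₁n : ‖w₁‖ < 1 := by
    calc ‖w₁‖ = dist w₁ 0 := (dist_zero_right _).symm
      _ ≤ dist w₁ (c t) + dist (c t) 0 := dist_triangle _ _ _
      _ = ρ' + (1 - t) := by
          rw [hw₁dist, dist_zero_right, hcn, abs_of_nonneg (by linarith)]
      _ < 1 := by linarith
  exact ⟨c t, ρ', hρ'pos, by linarith, hxb', hb',
    w₁, hw₁dist, mem_frontier_aux hA hρ'pos hb' hw₁c hw₁dist, hw₁n⟩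
theorem covering_lemma (N : ℕ) (hN : 1 ≤ N) (lam : ℝ) (hlam : 1 ≤ lam) :
    ∃ C : ℝ, 0 < C ∧
      C = 2 * (volume (ball (0 : EuclideanSpace ℝ (Fin N)) 1)).toReal * (3 * lam) ^ N ∧
      ∀ A : Set (EuclideanSpace ℝ (Fin N)),
        IsOpen A → A ⊆ ball 0 1 → A ≠ ball 0 1 →
          ∃ (M : ℕ) (y : Fin M → EuclideanSpace ℝ (Fin N)) (r : Fin M → ℝ),
            (∀ k, 0 < r k) ∧
            (∀ k, ball (y k) (r k) ⊆ A) ∧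
            (∀ k, ((frontier (ball (y k) (r k)) ∩ frontier A) \
              frontier (ball (0 : EuclideanSpace ℝ (Fin N)) 1)).Nonempty) ∧
            (Pairwise fun k l => Disjoint (ball (y k) (lam * r k)) (ball (y l) (lam * r l))) ∧
            volume A ≤ ENNReal.ofReal (C * ∑ k, r k ^ N) := by
  classical
  haveI : Nonempty (Fin N) := ⟨⟨0, hN⟩⟩
  haveI : Nontrivial (EuclideanSpace ℝ (Fin N)) :=
    Module.nontrivial_of_finrank_pos (R := ℝ)
      (by rw [finrank_euclideanSpace_fin]; exact hN)
  set ω := volume (ball (0 : EuclideanSpace ℝ (Fin N)) 1) with hωdef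
  have hωtop : ω ≠ ⊤ := measure_ball_lt_top.ne
  have hω0 : ω ≠ 0 := (measure_ball_pos volume 0 one_pos).ne'
  have hωR : 0 < ω.toReal := ENNReal.toReal_pos hω0 hωtop
  have hlam0 : (0:ℝ) < lam := by linarith
  refine ⟨2 * ω.toReal * (3 * lam) ^ N, by positivity, rfl, ?_⟩
  intro A hA hsub hneq
  rcases eq_empty_or_nonempty A with hAe | ⟨x₀, hx₀⟩
  · refine ⟨0, fun k => k.elim0, fun k => k.elim0, fun k => k.elim0, fun k => k.elim0,
      fun k => k.elim0, fun k l _ => k.elim0, ?_⟩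
    simp [hAe]
  -- choice of good balls
  have key : ∀ x ∈ A, ∃ y r, 0 < r ∧ r ≤ 2 ∧ x ∈ ball y r ∧ ball y r ⊆ A ∧
      ∃ w, dist w y = r ∧ w ∈ frontier A ∧ ‖w‖ < 1 :=
    fun x hx => key_ball A hA hsub hneq hx
  choose! yc rc hr0 hr2 hxb hbs wc hwd hwf hwn using key
  -- choice of τ
  obtain ⟨τ, hτ1, hτN⟩ : ∃ τ : ℝ, 1 < τ ∧ (2 * τ + 1) ^ N ≤ 3 / 2 * 3 ^ N := by
    have hc : ContinuousAt (fun τ : ℝ => (2 * τ + 1) ^ N) 1 := by fun_prop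
    have h0 : (2 * (1:ℝ) + 1) ^ N < 3 / 2 * 3 ^ N := by
      have h3N : (0:ℝ) < 3 ^ N := by positivity
      have h31 : (2 * (1:ℝ) + 1) = 3 := by norm_num
      rw [h31]
      linarith
    have hev := hc.eventually_lt_const h0
    rw [Metric.eventually_nhds_iff] at hev
    obtain ⟨ε, hε, hballe⟩ := hev
    have hmε : (0:ℝ) < min ε 1 := lt_min hε one_pos
    have hmε' : min ε 1 ≤ ε := min_le_left _ _
    refine ⟨1 + min ε 1 / 2, by linarith, ?_⟩
    have h1 : dist (1 + min ε 1 / 2) (1:ℝ) < ε := by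
      rw [Real.dist_eq, abs_of_nonneg (by linarith)]
      linarith
    exact (hballe h1).le
  have hτ0 : (0:ℝ) < 2 * τ + 1 := by linarith
  set K := (2 * τ + 1) * lam with hKdef
  have hK0 : 0 < K := by positivity
  -- Vitali covering
  obtain ⟨u, huA, hudisj, hucov⟩ :=
    Vitali.exists_disjoint_subfamily_covering_enlargement
      (fun a => ball (yc a) (lam * rc a)) A (fun a => lam * rc a) τ hτ1
      (fun a ha => by
        have := (hr0 a ha).le
        positivity)
      (lam * 2) (fun a ha => by
        show lam * rc a ≤ lam * 2
        have h1 := hr2 a ha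
        have h2 := hr0 a ha
        nlinarith)
      (fun a ha => nonempty_ball.mpr (by
        have := hr0 a ha
        positivity))
  have hrpos : ∀ b ∈ u, 0 < rc b := fun b hb => hr0 b (huA hb)
  have hucnt : u.Countable :=
    hudisj.countable_of_isOpen (fun i _ => isOpen_ball)
      (fun i hi => nonempty_ball.mpr (by have := hrpos i hi; positivity))
  -- covering of A by enlarged balls
  have hcov : A ⊆ ⋃ b ∈ u, ball (yc b) (K * rc b) := by
    intro p hp
    obtain ⟨b, hbu, ⟨q, hq1, hq2⟩, hle⟩ := hucov p hp
    refine mem_biUnion hbu ?_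
    rw [mem_ball]
    have h1 : dist p (yc p) < rc p := mem_ball.mp (hxb p hp)
    have h2 : dist (yc p) q < lam * rc p := by
      rw [dist_comm]; exact mem_ball.mp hq1
    have h3 : dist q (yc b) < lam * rc b := mem_ball.mp hq2
    have h4 : rc p ≤ lam * rc p := by
      have := hr0 p hp
      nlinarith
    have h5 : dist p (yc b) ≤ dist p (yc p) + dist (yc p) q + dist q (yc b) :=
      dist_triangle4 _ _ _ _
    have h6 : 0 < rc b := hrpos b hbu
    have h7 : lam * rc p ≤ τ * (lam * rc b) := hle
    nlinarith
  -- the volume of balls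
  have hvol : ∀ (c : EuclideanSpace ℝ (Fin N)) (s : ℝ), 0 ≤ s →
      volume (ball c s) = ENNReal.ofReal (s ^ N) * ω := by
    intro c s hs
    rw [hωdef, Measure.addHaar_ball volume c hs, finrank_euclideanSpace_fin]
  set S : ℝ≥0∞ := ∑' (b : ↥u), ENNReal.ofReal (rc b ^ N) with hSdef
  -- S is finite
  have hsum_eq : ∑' (b : ↥u), volume (ball (yc (b : EuclideanSpace ℝ (Fin N))) (lam * rc b))
      = volume (⋃ b ∈ u, ball (yc b) (lam * rc b)) :=
    (measure_biUnion hucnt hudisj fun b _ => measurableSet_ball).symm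
  have hsum_eq2 : ∑' (b : ↥u), volume (ball (yc (b : EuclideanSpace ℝ (Fin N))) (lam * rc b))
      = ENNReal.ofReal (lam ^ N) * ω * S := by
    rw [hSdef, ← ENNReal.tsum_mul_left]
    refine tsum_congr fun b => ?_
    rw [hvol _ _ (mul_pos hlam0 (hrpos b b.2)).le, mul_pow,
      ENNReal.ofReal_mul (by positivity)]
    ring
  have hStop : S ≠ ⊤ := by
    intro hS
    have h1 : ENNReal.ofReal (lam ^ N) * ω * S = ⊤ := by
      rw [hS, ENNReal.mul_eq_top]
      refine Or.inl ⟨mul_ne_zero ?_ hω0, rfl⟩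
      simp only [ne_eq, ENNReal.ofReal_eq_zero, not_le]
      positivity
    have h2 : volume (⋃ b ∈ u, ball (yc b) (lam * rc b))
        ≤ volume (ball (0 : EuclideanSpace ℝ (Fin N)) (1 + lam * 2)) := by
      refine measure_mono (iUnion₂_subset fun b hb => ?_)
      refine ball_subset_ball' ?_
      have h3 : ‖yc b‖ < 1 :=
        mem_ball_zero_iff.mp (hsub (hbs b (huA hb) (mem_ball_self (hrpos b hb))))
      have h4 : rc b ≤ 2 := hr2 b (huA hb)
      have h5 : 0 < rc b := hrpos b hb
      rw [dist_zero_right]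
      nlinarith
    rw [hsum_eq2, h1] at hsum_eq
    exact absurd (lt_of_le_of_lt (hsum_eq ▸ h2) measure_ball_lt_top) (by simp)
  -- main volume bound with S
  have hvolA : volume A ≤ ENNReal.ofReal (K ^ N) * ω * S := by
    calc volume A ≤ volume (⋃ b ∈ u, ball (yc b) (K * rc b)) := measure_mono hcov
      _ ≤ ∑' (b : ↥u), volume (ball (yc (b : EuclideanSpace ℝ (Fin N))) (K * rc b)) :=
          measure_biUnion_le volume hucnt _
      _ = ENNReal.ofReal (K ^ N) * ω * S := by
          rw [hSdef, ← ENNReal.tsum_mul_left]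
          refine tsum_congr fun b => ?_
          rw [hvol _ _ (mul_pos hK0 (hrpos b b.2)).le, mul_pow,
            ENNReal.ofReal_mul (by positivity)]
          ring
  have hS0 : S ≠ 0 := by
    intro h
    rw [h, mul_zero] at hvolA
    exact absurd (le_antisymm hvolA zero_le) (hA.measure_pos volume ⟨x₀, hx₀⟩).ne'
  -- finite subfamily carrying 3/4 of the sum
  have h34 : ENNReal.ofReal (3/4) * S < S := by
    have hlt : ENNReal.ofReal (3/4) < 1 := ENNReal.ofReal_lt_one.mpr (by norm_num)
    have := ENNReal.mul_lt_mul_left hS0 hStop hlt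
    rwa [one_mul] at this
  have h34' : ENNReal.ofReal (3/4) * S
      < ⨆ F : Finset ↥u, ∑ b ∈ F, ENNReal.ofReal (rc (b : EuclideanSpace ℝ (Fin N)) ^ N) := by
    rw [← ENNReal.tsum_eq_iSup_sum]
    exact h34
  obtain ⟨F, hF⟩ := lt_iSup_iff.mp h34'
  -- conclusion
  set M := F.card with hM
  set e : ↥F ≃ Fin M := F.equivFin with he
  have hmemA : ∀ k : Fin M, ((e.symm k : ↥u) : EuclideanSpace ℝ (Fin N)) ∈ A :=
    fun k => huA (e.symm k).1.2
  refine ⟨M, fun k => yc ((e.symm k : ↥u) : EuclideanSpace ℝ (Fin N)),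
    fun k => rc ((e.symm k : ↥u) : EuclideanSpace ℝ (Fin N)), ?_, ?_, ?_, ?_, ?_⟩
  · exact fun k => hr0 _ (hmemA k)
  · exact fun k => hbs _ (hmemA k)
  · intro k
    have h0 : 0 < rc ((e.symm k : ↥u) : EuclideanSpace ℝ (Fin N)) := hr0 _ (hmemA k)
    refine ⟨wc ((e.symm k : ↥u) : EuclideanSpace ℝ (Fin N)),
      (Set.mem_diff _).mpr ⟨Set.mem_inter ?_ (hwf _ (hmemA k)), ?_⟩⟩
    · rw [frontier_ball _ h0.ne']
      exact mem_sphere.mpr (hwd _ (hmemA k))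
    · rw [frontier_ball (0 : EuclideanSpace ℝ (Fin N)) one_ne_zero]
      intro hmem
      rw [mem_sphere, dist_zero_right] at hmem
      exact absurd hmem (ne_of_lt (hwn _ (hmemA k)))
  · intro k l hkl
    have hne' : ((e.symm k : ↥u) : EuclideanSpace ℝ (Fin N))
        ≠ ((e.symm l : ↥u) : EuclideanSpace ℝ (Fin N)) := by
      intro h
      apply hkl
      have h1 : (e.symm k : ↥u) = (e.symm l : ↥u) := Subtype.ext h
      have h2 : e.symm k = e.symm l := Subtype.ext h1
      have h3 := congrArg e h2
      simpa using h3
    exact hudisj (e.symm k).1.2 (e.symm l).1.2 hne'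
  · -- the volume estimate
    show volume A ≤ ENNReal.ofReal (2 * ω.toReal * (3 * lam) ^ N *
      ∑ k : Fin M, rc ((e.symm k : ↥u) : EuclideanSpace ℝ (Fin N)) ^ N)
    set Sr := ∑ k : Fin M, rc ((e.symm k : ↥u) : EuclideanSpace ℝ (Fin N)) ^ N with hSrdef
    have hSnn : 0 ≤ Sr :=
      Finset.sum_nonneg fun k _ => pow_nonneg (hr0 _ (hmemA k)).le N
    have hsum_real : Sr = ∑ b ∈ F, rc ((b : ↥u) : EuclideanSpace ℝ (Fin N)) ^ N := by
      rw [hSrdef, ← Finset.sum_coe_sort F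
        (fun b => rc ((b : ↥u) : EuclideanSpace ℝ (Fin N)) ^ N)]
      exact Equiv.sum_comp e.symm (fun b => rc ((b : ↥u) : EuclideanSpace ℝ (Fin N)) ^ N)
    have hFeq : (∑ b ∈ F, ENNReal.ofReal (rc (b : EuclideanSpace ℝ (Fin N)) ^ N))
        = ENNReal.ofReal Sr := by
      rw [hsum_real]
      exact (ENNReal.ofReal_sum_of_nonneg fun i _ => pow_nonneg (hr0 _ (huA i.2)).le N).symm
    have hone : ENNReal.ofReal (4/3) * ENNReal.ofReal (3/4) = 1 := by
      rw [← ENNReal.ofReal_mul (by norm_num)]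
      norm_num
    have hSle : S ≤ ENNReal.ofReal (4/3) * ENNReal.ofReal Sr := by
      calc S = ENNReal.ofReal (4/3) * ENNReal.ofReal (3/4) * S := by rw [hone, one_mul]
        _ = ENNReal.ofReal (4/3) * (ENNReal.ofReal (3/4) * S) := mul_assoc _ _ _
        _ ≤ ENNReal.ofReal (4/3)
            * (∑ b ∈ F, ENNReal.ofReal (rc (b : EuclideanSpace ℝ (Fin N)) ^ N)) :=
          mul_le_mul_right hF.le _
        _ = ENNReal.ofReal (4/3) * ENNReal.ofReal Sr := by rw [hFeq]
    have hKN : K ^ N ≤ 3 / 2 * 3 ^ N * lam ^ N := by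
      rw [hKdef, mul_pow]
      exact mul_le_mul_of_nonneg_right hτN (by positivity)
    have hreal : K ^ N * ω.toReal * (4/3 * Sr) ≤ 2 * ω.toReal * (3 * lam) ^ N * Sr := by
      have h1 : 0 ≤ ω.toReal * (4/3 * Sr) :=
        mul_nonneg ENNReal.toReal_nonneg (by linarith)
      calc K ^ N * ω.toReal * (4/3 * Sr) = K ^ N * (ω.toReal * (4/3 * Sr)) := by ring
        _ ≤ (3 / 2 * 3 ^ N * lam ^ N) * (ω.toReal * (4/3 * Sr)) :=
          mul_le_mul_of_nonneg_right hKN h1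
        _ = 2 * ω.toReal * (3 * lam) ^ N * Sr := by rw [mul_pow]; ring
    calc volume A ≤ ENNReal.ofReal (K ^ N) * ω * S := hvolA
      _ ≤ ENNReal.ofReal (K ^ N) * ω * (ENNReal.ofReal (4/3) * ENNReal.ofReal Sr) :=
          mul_le_mul_right hSle _
      _ = ENNReal.ofReal (K ^ N * ω.toReal * (4/3 * Sr)) := by
          rw [ENNReal.ofReal_mul (mul_nonneg (pow_nonneg hK0.le N) ENNReal.toReal_nonneg),
            ENNReal.ofReal_mul (pow_nonneg hK0.le N),
            ENNReal.ofReal_mul (by norm_num : (0:ℝ) ≤ 4/3),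
            ENNReal.ofReal_toReal hωtop]
      _ ≤ ENNReal.ofReal (2 * ω.toReal * (3 * lam) ^ N * Sr) :=
          ENNReal.ofReal_le_ofReal hreal
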